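/- Every non-minimal M-semiflow on a uniform space is sensitive to initial conditions. That is, if a topological semiflow (T,X) on a uniform space (X,𝓤) is topologically transitive with dense almost periodic points, and some orbit T•x is not dense in X, then there is an entourage ε ∈ 𝓤 such that for every x ∈ X and every neighborhood V of x there exist y ∈ V and t ∈ T with (t•x, t•y) ∉ ε. -/

import Mathlib

open Filter Topology Set Uniformity

/-- A subset `B` of a topological monoid `T` is *syndetic* if there is a compact set
`K ⊆ T` such that `K·t` meets `B` for every `t ∈ T`. -/
def Syndetic {T : Type*} [Monoid T] [TopologicalSpace T] (B : Set T) : Prop :=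
  ∃ K : Set T, IsCompact K ∧ ∀ t : T, ∃ k ∈ K, k * t ∈ B

/-- The hitting-time set `N_T(U,V) = {t ∈ T : ∃ x ∈ U, t • x ∈ V}`. -/
def HittingTimes (T : Type*) {X : Type*} [Monoid T] [MulAction T X] (U V : Set X) : Set T :=
  {t : T | ∃ x ∈ U, t • x ∈ V}

/-- Tube lemma: for a compact set `K` of a topological monoid acting continuously,
a fixed `s`, a point `v` and an entourage `ε`, there is a neighborhood `W` of `v`
such that `(s*k) • y` stays `ε`-close to `(s*k) • v` for all `k ∈ K`, `y ∈ W`. -/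
lemma tube_lemma_smul {T X : Type*} [Monoid T] [TopologicalSpace T] [ContinuousMul T]
    [UniformSpace X] [MulAction T X] [ContinuousSMul T X]
    (K : Set T) (hK : IsCompact K) (s : T) (v : X) {ε : Set (X × X)} (hε : ε ∈ 𝓤 X) :
    ∃ W ∈ 𝓝 v, ∀ k ∈ K, ∀ y ∈ W, ((s * k) • y, (s * k) • v) ∈ ε := by
  obtain ⟨ε', hε', hsym', hcomp'⟩ := comp_symm_mem_uniformity_sets hε
  have hF : Continuous (fun p : T × X => (s * p.1) • p.2) :=
    (continuous_const.mul continuous_fst).smul continuous_snd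
  have hmem : ∀ k : T,
      (fun p : T × X => (s * p.1) • p.2) ⁻¹' UniformSpace.ball ((s * k) • v) ε'
        ∈ 𝓝 (k, v) := by
    intro k
    exact hF.continuousAt.preimage_mem_nhds (UniformSpace.ball_mem_nhds _ hε')
  choose N hN W hW hsub using fun k : T => mem_nhds_prod_iff.1 (hmem k)
  obtain ⟨tf, htfK, hcover⟩ := hK.elim_nhds_subcover N (fun k _ => hN k)
  refine ⟨⋂ k ∈ tf, W k, (Filter.biInter_finset_mem tf).2 fun k _ => hW k, ?_⟩
  intro k hk y hy
  obtain ⟨ki, hkit, hkN⟩ : ∃ ki ∈ tf, k ∈ N ki := by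
    have := hcover hk
    simpa using this
  have hyW : y ∈ W ki := by
    have := Set.mem_iInter₂.1 hy ki hkit
    exact this
  have h1 : ((s * ki) • v, (s * k) • y) ∈ ε' := by
    simpa [UniformSpace.ball] using hsub ki (Set.mk_mem_prod hkN hyW)
  have h2 : ((s * ki) • v, (s * k) • v) ∈ ε' := by
    simpa [UniformSpace.ball] using hsub ki (Set.mk_mem_prod hkN (mem_of_mem_nhds (hW ki)))
  exact hcomp' (SetRel.prodMk_mem_comp (hsym'.symm _ _ h1) h2)

/-- Every non-minimal M-semiflow on a uniform space is sensitive to initial conditions: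
if `(T,X)` is topologically transitive with dense almost periodic points and some orbit
is not dense, then there is an entourage `ε` such that for every `x` and every
neighborhood `V` of `x` there are `y ∈ V` and `t ∈ T` with `(t • x, t • y) ∉ ε`. -/
theorem nonminimal_msemiflow_sensitive
    {T X : Type*} [Monoid T] [TopologicalSpace T] [ContinuousMul T]
    [UniformSpace X] [MulAction T X] [ContinuousSMul T X]
    (htrans : ∀ U V : Set X, IsOpen U → U.Nonempty → IsOpen V → V.Nonempty →
      (HittingTimes T U V).Nonempty)
    (hap : Dense {x : X | ∀ U : Set X, IsOpen U → x ∈ U → Syndetic {t : T | t • x ∈ U}})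
    (hnonmin : ∃ x : X, ¬ Dense (MulAction.orbit T x)) :
    ∃ ε ∈ 𝓤 X, ∀ x : X, ∀ V ∈ 𝓝 x, ∃ y ∈ V, ∃ t : T, (t • x, t • y) ∉ ε := by
  by_contra hsen
  push_neg at hsen
  obtain ⟨x₀, hx₀⟩ := hnonmin
  apply hx₀
  rw [dense_iff_inter_open]
  intro O hO hOne
  suffices h : ∃ t : T, t • x₀ ∈ O by
    obtain ⟨t, ht⟩ := h
    exact ⟨t • x₀, ht, MulAction.mem_orbit x₀ t⟩
  obtain ⟨w, hw⟩ := hOne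
  -- set up entourages
  obtain ⟨ε₀, hε₀, hball₀⟩ := UniformSpace.mem_nhds_iff.1 (hO.mem_nhds hw)
  obtain ⟨ε₁, hε₁, h1⟩ := comp_mem_uniformity_sets hε₀
  obtain ⟨ε₂, hε₂, h2⟩ := comp_mem_uniformity_sets hε₁
  obtain ⟨ε₃, hε₃, hεsym, h3⟩ := comp_symm_mem_uniformity_sets hε₂
  have c3 : ∀ {a b c : X}, (a, b) ∈ ε₃ → (b, c) ∈ ε₃ → (a, c) ∈ ε₂ :=
    fun hab hbc => h3 (SetRel.prodMk_mem_comp hab hbc)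
  have c2 : ∀ {a b c : X}, (a, b) ∈ ε₂ → (b, c) ∈ ε₂ → (a, c) ∈ ε₁ :=
    fun hab hbc => h2 (SetRel.prodMk_mem_comp hab hbc)
  have c1 : ∀ {a b c : X}, (a, b) ∈ ε₁ → (b, c) ∈ ε₁ → (a, c) ∈ ε₀ :=
    fun hab hbc => h1 (SetRel.prodMk_mem_comp hab hbc)
  -- a "stable" point for the entourage ε₃ from non-sensitivity
  obtain ⟨xε, Vε, hVε, hstab⟩ := hsen ε₃ hε₃
  obtain ⟨V₁, hV₁sub, hV₁open, hxV₁⟩ := mem_nhds_iff.1 hVε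
  -- an almost periodic point in V₁
  obtain ⟨q, hqAP, hqV⟩ := hap.exists_mem_open hV₁open ⟨xε, hxV₁⟩
  -- first transitivity shot: from V₁ into a small ball around w
  obtain ⟨O₁, hO₁sub, hO₁open, hwO₁⟩ :=
    mem_nhds_iff.1 (UniformSpace.ball_mem_nhds w hε₃)
  obtain ⟨s, z, hzV, hszO₁⟩ := htrans V₁ O₁ hV₁open ⟨xε, hxV₁⟩ hO₁open ⟨w, hwO₁⟩
  -- a small open neighborhood of q pulled back through s
  have hUq' : (fun y : X => s • y) ⁻¹' UniformSpace.ball (s • q) ε₃ ∈ 𝓝 q :=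
    (continuous_const_smul s).continuousAt.preimage_mem_nhds
      (UniformSpace.ball_mem_nhds _ hε₃)
  obtain ⟨Uq, hUqsub, hUqopen, hqUq⟩ := mem_nhds_iff.1 hUq'
  -- syndeticity of return times of q to Uq
  obtain ⟨K, hKcomp, hKsynd⟩ := hqAP Uq hUqopen hqUq
  -- tube around x₀ for the compact set K (with prefix s)
  obtain ⟨Wv, hWv, htube⟩ := tube_lemma_smul K hKcomp s x₀ hε₃
  obtain ⟨W₁, hW₁sub, hW₁open, hvW₁⟩ := mem_nhds_iff.1 hWv
  -- second transitivity shot: from V₁ into W₁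
  obtain ⟨s', z', hz'V, hs'z'⟩ := htrans V₁ W₁ hV₁open ⟨xε, hxV₁⟩ hW₁open ⟨x₀, hvW₁⟩
  -- a syndetic return of q at "time" s'
  obtain ⟨k, hkK, hkUq⟩ := hKsynd s'
  refine ⟨s * k, ?_⟩
  -- the chain of ε₃-steps from w to (s*k) • x₀
  have m01 : (w, s • z) ∈ ε₃ := hO₁sub hszO₁
  have m12 : (s • z, s • xε) ∈ ε₃ := hεsym.symm _ _ (hstab z (hV₁sub hzV) s)
  have m23 : (s • xε, s • q) ∈ ε₃ := hstab q (hV₁sub hqV) s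
  have m34 : (s • q, (s * (k * s')) • q) ∈ ε₃ := by
    have hx : (k * s') • q ∈ Uq := hkUq
    have := hUqsub hx
    rw [mul_smul]
    exact this
  have m45 : ((s * (k * s')) • q, (s * (k * s')) • xε) ∈ ε₃ :=
    hεsym.symm _ _ (hstab q (hV₁sub hqV) (s * (k * s')))
  have m56 : ((s * (k * s')) • xε, (s * (k * s')) • z') ∈ ε₃ :=
    hstab z' (hV₁sub hz'V) (s * (k * s'))
  have m67 : ((s * (k * s')) • z', (s * k) • x₀) ∈ ε₃ := by
    have h := htube k hkK (s' • z') (hW₁sub hs'z')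
    have heq : (s * (k * s')) • z' = (s * k) • (s' • z') := by
      rw [← mul_assoc, mul_smul]
    rw [heq]
    exact h
  have mfin : (w, (s * k) • x₀) ∈ ε₀ :=
    c1 (c2 (c3 m01 m12) (c3 m23 m34)) (c2 (c3 m45 m56) (c3 m67 (refl_mem_uniformity hε₃)))
  exact hball₀ mfin
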